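/- (Lemma 2) Let the total number of chips in a two-color Babylon position be n = 2m. Any position with an odd number of stacks in which exactly one stack X has color x is a first-player win (the player to move wins), provided: the height u of X is less than m; it is not the case that every stack of the other color y has height u/2 (i.e., not every y-stack t satisfies 2·height(t) = u); and at most two y-stacks have height u. -/

import Mathlib

/-- A chip color: `true` = red, `false` = blue.  A stack is a nonempty list of
chips, the head of the list being the top chip; the color of a stack is the
color of its top chip.  A position is a finite multiset of stacks. -/
abbrev Stack := List Bool

abbrev Position := Multiset Stack

/-- A legal move replaces two stacks `s` and `t` that have equal length or
equal top color by the single concatenated stack `s ++ t`. -/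
def Move (P Q : Position) : Prop :=
  ∃ s t : Stack, s ≠ [] ∧ t ≠ [] ∧ s ∈ P ∧ t ∈ P.erase s ∧
    (s.length = t.length ∨ s.head? = t.head?) ∧
    Q = (s ++ t) ::ₘ (P.erase s).erase t

/-- Auxiliary predicate, with the number of stacks as fuel: the player to move
wins iff there is a legal move to a position that is not a first-player win. -/
def FirstWinAux : ℕ → Position → Prop
  | 0, _ => False
  | n + 1, P => ∃ Q, Move P Q ∧ ¬ FirstWinAux n Q

/-- The position is a first-player win: the player to move has a winning
strategy.  Since each move decreases the number of stacks by exactly one,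
`Multiset.card P` is enough fuel. -/
def FirstWin (P : Position) : Prop := FirstWinAux (Multiset.card P) P

/-- The initial position with `p` red singleton stacks and `q` blue
singleton stacks. -/
def initPos (p q : ℕ) : Position :=
  Multiset.replicate p [true] + Multiset.replicate q [false]


open Multiset

section BabylonLemma2

/-! ### Abstract combinatorial layer -/

def BadD (h : ℕ) (H : Multiset ℕ) : Prop :=
  ∃ p q T, H = p ::ₘ q ::ₘ T ∧ 2 * (p + q) = h ∧ ∀ t ∈ T, 2 * t = h

def Cpred (h : ℕ) (H : Multiset ℕ) : Prop :=
  Even (Multiset.card H) ∧ H ≠ 0 ∧ h < H.sum ∧ ¬(∀ t ∈ H, 2 * t = h) ∧ H.count h ≤ 2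

def Dpred (h : ℕ) (H : Multiset ℕ) : Prop :=
  Odd (Multiset.card H) ∧ h ∉ H ∧ h < H.sum ∧ ¬ BadD h H

lemma not_badD {h u : ℕ} {H : Multiset ℕ} (hu : u ∈ H) (h2 : h < 2 * u) : ¬ BadD h H := by
  rintro ⟨p, q, T, rfl, hpq, hall⟩
  rcases mem_cons.mp hu with rfl | hu'
  · omega
  rcases mem_cons.mp hu' with rfl | hu''
  · omega
  · have := hall u hu''; omega

lemma D_to_C {h a b : ℕ} {T : Multiset ℕ} (hD : Dpred h (a ::ₘ b ::ₘ T)) :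
    Cpred h ((a + b) ::ₘ T) := by
  obtain ⟨hodd, hmem, hsum, hbad⟩ := hD
  refine ⟨?_, cons_ne_zero, ?_, ?_, ?_⟩
  · have := hodd
    simp only [card_cons] at this ⊢
    rw [Nat.odd_iff] at this; rw [Nat.even_iff]; omega
  · simpa [sum_cons, ← add_assoc] using hsum
  · intro hall
    exact hbad ⟨a, b, T, rfl, hall _ (mem_cons_self _ _), fun t ht => hall t (mem_cons_of_mem ht)⟩
  · have h1 : h ∉ T := fun ht => hmem (mem_cons_of_mem (mem_cons_of_mem ht))
    rw [count_cons]
    simp [count_eq_zero.mpr h1]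
    split <;> omega

lemma exists_good_merge {h : ℕ} {H : Multiset ℕ}
    (hEven : Even (Multiset.card H)) (hne : H ≠ 0) (hlt : h < H.sum)
    (hnall : ¬ ∀ t ∈ H, 2 * t = h) (hcnt : H.count h ≤ 2)
    (hpos : ∀ t ∈ H, 0 < t) (hh : 0 < h) :
    ∃ a b T, H = a ::ₘ b ::ₘ T ∧ a + b ≠ h ∧ h ∉ T ∧ ¬ BadD h ((a + b) ::ₘ T) := by
  have hcard2 : 2 ≤ Multiset.card H := by
    rcases hEven with ⟨k, hk⟩
    have : Multiset.card H ≠ 0 := fun h0 => hne (card_eq_zero.mp h0)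
    omega
  by_cases hc : h ∈ H
  · obtain ⟨E, rfl⟩ := exists_cons_of_mem hc
    by_cases hc2 : h ∈ E
    · -- two copies of h, merge them together
      obtain ⟨F, rfl⟩ := exists_cons_of_mem hc2
      refine ⟨h, h, F, rfl, by omega, ?_, not_badD (mem_cons_self _ _) (by omega)⟩
      intro hmem
      have h3 : 3 ≤ ((h ::ₘ h ::ₘ F) : Multiset ℕ).count h := by
        have := count_pos.mpr hmem
        simp only [count_cons_self]
        omega
      omega
    · -- one copy of h, merge it with any other stack
      have hE0 : E ≠ 0 := by
        intro h0; subst h0; simp at hcard2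
      obtain ⟨b, hb⟩ := exists_mem_of_ne_zero hE0
      obtain ⟨F, rfl⟩ := exists_cons_of_mem hb
      have hbpos : 0 < b := hpos b (by simp)
      refine ⟨h, b, F, rfl, by omega, ?_, not_badD (mem_cons_self _ _) (by omega)⟩
      exact fun hmem => hc2 (mem_cons_of_mem hmem)
  · -- no copy of h among the y-stacks
    by_cases hhalf : ∃ a ∈ H, 2 * a = h
    · -- merge an h/2-stack with a non-h/2-stack
      obtain ⟨a, ha, ha2⟩ := hhalf
      push_neg at hnall
      obtain ⟨e, he, he2⟩ := hnall
      have hea : e ≠ a := fun h' => he2 (h' ▸ ha2)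
      obtain ⟨E, rfl⟩ := exists_cons_of_mem ha
      have he' : e ∈ E := by
        rcases mem_cons.mp he with h' | h'
        · exact absurd h' hea
        · exact h'
      obtain ⟨F, rfl⟩ := exists_cons_of_mem he'
      have hepos : 0 < e := hpos e he
      refine ⟨a, e, F, rfl, by omega, ?_, not_badD (mem_cons_self _ _) (by omega)⟩
      exact fun hmem => hc (mem_cons_of_mem (mem_cons_of_mem hmem))
    · -- no stack has height h/2
      push_neg at hhalf
      obtain ⟨a, ha⟩ := exists_mem_of_ne_zero hne
      obtain ⟨E, hEdef⟩ := exists_cons_of_mem ha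
      subst hEdef
      have hE0 : E ≠ 0 := by
        intro h0; subst h0; simp at hcard2
      obtain ⟨b, hb⟩ := exists_mem_of_ne_zero hE0
      obtain ⟨F, hFdef⟩ := exists_cons_of_mem hb
      subst hFdef
      rcases F.empty_or_exists_mem with hF0 | ⟨c, hcF⟩
      · -- exactly two stacks
        subst hF0
        refine ⟨a, b, 0, rfl, ?_, by simp, ?_⟩
        · have : (a ::ₘ b ::ₘ (0:Multiset ℕ)).sum = a + b := by simp
          omega
        · rintro ⟨p, q, T, hEq, -, -⟩
          have := congrArg Multiset.card hEq
          simp at this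
      · obtain ⟨G, hGdef⟩ := exists_cons_of_mem hcF
        subst hGdef
        -- choose a pair among a,b,c with sum ≠ h
        have key : ∃ a' b' T, (a ::ₘ b ::ₘ c ::ₘ G) = a' ::ₘ b' ::ₘ T ∧ a' + b' ≠ h := by
          by_cases h1 : a + b ≠ h
          · exact ⟨a, b, c ::ₘ G, rfl, h1⟩
          by_cases h2 : a + c ≠ h
          · exact ⟨a, c, b ::ₘ G, by rw [cons_swap b c], h2⟩
          · push_neg at h1 h2
            have hbc : b = c := by omega
            have h2b : 2 * b ≠ h := hhalf b (by simp)
            refine ⟨b, c, a ::ₘ G, ?_, by omega⟩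
            rw [cons_swap a b]
            congr 1
            rw [cons_swap a c]
        obtain ⟨a', b', T, hEq, hab⟩ := key
        have hTle : T ≤ (a ::ₘ b ::ₘ c ::ₘ G) := by
          rw [hEq]; exact (le_cons_self _ _).trans (le_cons_self _ _)
        have hcard4 : 4 ≤ Multiset.card (a ::ₘ b ::ₘ c ::ₘ G) := by
          have h3 : Multiset.card (a ::ₘ b ::ₘ c ::ₘ G) = Multiset.card G + 3 := by simp
          rcases hEven with ⟨k, hk⟩
          rw [h3] at hk
          omega
        have hcardT : 2 ≤ Multiset.card T := by
          have h5 := congrArg Multiset.card hEq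
          have h6 : Multiset.card (a ::ₘ b ::ₘ c ::ₘ G) = Multiset.card G + 3 := by simp
          simp at h5
          omega
        refine ⟨a', b', T, hEq, hab, fun hmem => hc (mem_of_le hTle hmem), ?_⟩
        rintro ⟨p, q, T', hEq', hpq, hall⟩
        have hT'card : Multiset.card T' + 1 = Multiset.card T := by
          have := congrArg Multiset.card hEq'
          simp at this
          omega
        have hsub : T' ≤ (a' + b') ::ₘ T := by
          rw [hEq']
          exact (le_cons_self _ _).trans (le_cons_self _ _)
        have hTall : ∀ u ∈ T', u = a' + b' := by
          intro u hu
          rcases mem_cons.mp (mem_of_le hsub hu) with h' | h'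
          · exact h'
          · exact absurd (hall u hu) (hhalf u (mem_of_le hTle h'))
        have hT'0 : T' ≠ 0 := by
          intro h0
          rw [h0] at hT'card
          simp at hT'card
          omega
        obtain ⟨u0, hu0⟩ := exists_mem_of_ne_zero hT'0
        have habh : 2 * (a' + b') = h := (hTall u0 hu0) ▸ hall u0 hu0
        have habT : a' + b' ∉ T := fun h' => hhalf _ (mem_of_le hTle h') habh
        have hcount : Multiset.card T' ≤ 1 := by
          have e1 : T'.count (a' + b') = Multiset.card T' :=
            count_eq_card.mpr fun x hx => (hTall x hx).symm
          have e2 : ((a' + b') ::ₘ T).count (a' + b') = 1 := by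
            rw [count_cons_self, count_eq_zero.mpr habT]
          have := count_le_of_le (a' + b') hsub
          omega
        -- so card T' = 1; the sums now give a contradiction
        obtain ⟨w, hw⟩ := card_eq_one.mp (by omega : Multiset.card T' = 1)
        have hwval : w = a' + b' := hTall w (by simp [hw])
        have hsum' : a' + b' + T.sum = p + q + (a' + b') := by
          have := congrArg Multiset.sum hEq'
          rw [hw] at this
          simp [hwval] at this
          omega
        have hsumH : (a ::ₘ b ::ₘ c ::ₘ G).sum = a' + b' + T.sum := by
          rw [hEq]; simp [add_assoc]
        omega

/-! ### Position-level layer -/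

lemma head?_append' {s t : Stack} {c : Bool} (h : s.head? = some c) :
    (s ++ t).head? = some c := by
  cases s with
  | nil => simp at h
  | cons a l => simpa using h

lemma ne_nil_of_head? {s : Stack} {c : Bool} (h : s.head? = some c) : s ≠ [] := by
  cases s with
  | nil => simp at h
  | cons a l => simp

lemma some_ne_some_not (x : Bool) : (some x : Option Bool) ≠ some (!x) := by
  cases x <;> simp

lemma move_construct {x : Bool} {X s t : Stack} {R : Multiset Stack}
    (hX : X.head? = some x) (hs : s.head? = some (!x)) (ht : t.head? = some (!x)) :
    Move (X ::ₘ s ::ₘ t ::ₘ R) (X ::ₘ (s ++ t) ::ₘ R) := by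
  have hsX : s ≠ X := by
    intro h; rw [h, hX] at hs; exact some_ne_some_not x hs
  have htX : t ≠ X := by
    intro h; rw [h, hX] at ht; exact some_ne_some_not x ht
  have he1 : (X ::ₘ s ::ₘ t ::ₘ R).erase s = X ::ₘ t ::ₘ R := by
    rw [erase_cons_tail _ (Ne.symm hsX), erase_cons_head]
  have he2 : (X ::ₘ t ::ₘ R).erase t = X ::ₘ R := by
    rw [erase_cons_tail _ (Ne.symm htX), erase_cons_head]
  refine ⟨s, t, ne_nil_of_head? hs, ne_nil_of_head? ht, ?_, ?_,
    Or.inr (hs.trans ht.symm), ?_⟩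
  · exact mem_cons_of_mem (mem_cons_self _ _)
  · rw [he1]; exact mem_cons_of_mem (mem_cons_self _ _)
  · rw [he1, he2, cons_swap]

lemma move_classify {x : Bool} {X : Stack} {Y : Multiset Stack} {Q : Position}
    (hX : X.head? = some x) (hY : ∀ t ∈ Y, t.head? = some (!x))
    (hlen : ∀ t ∈ Y, t.length ≠ X.length)
    (hmv : Move (X ::ₘ Y) Q) :
    ∃ s t R, Y = s ::ₘ t ::ₘ R ∧ Q = X ::ₘ (s ++ t) ::ₘ R := by
  obtain ⟨s, t, hs0, ht0, hsP, htP, hcond, hQ⟩ := hmv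
  by_cases hsX : s = X
  · subst hsX
    rw [erase_cons_head] at htP
    rcases hcond with hc | hc
    · exact absurd hc.symm (hlen t htP)
    · rw [hX, hY t htP] at hc
      exact absurd hc (some_ne_some_not x)
  · have hsY : s ∈ Y := by
      rcases mem_cons.mp hsP with h | h
      · exact absurd h hsX
      · exact h
    rw [erase_cons_tail _ (Ne.symm hsX)] at htP hQ
    have htX : t ≠ X := by
      intro h; subst h
      rcases hcond with hc | hc
      · exact absurd hc (hlen s hsY)
      · rw [hX, hY s hsY] at hc
        exact absurd hc.symm (some_ne_some_not x)
    have htY : t ∈ Y.erase s := by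
      rcases mem_cons.mp htP with h | h
      · exact absurd h htX
      · exact h
    refine ⟨s, t, (Y.erase s).erase t, ?_, ?_⟩
    · rw [cons_erase htY, cons_erase hsY]
    · rw [hQ, erase_cons_tail _ (Ne.symm htX), cons_swap]

lemma decompose_map {Y : Multiset Stack} {a b : ℕ} {T : Multiset ℕ}
    (h : Y.map List.length = a ::ₘ b ::ₘ T) :
    ∃ s t R, Y = s ::ₘ t ::ₘ R ∧ s.length = a ∧ t.length = b ∧
      R.map List.length = T := by
  have ha : a ∈ Y.map List.length := by rw [h]; exact mem_cons_self _ _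
  obtain ⟨s, hsY, hsl⟩ := mem_map.mp ha
  obtain ⟨Y1, rfl⟩ := exists_cons_of_mem hsY
  rw [map_cons, hsl] at h
  have h1 : Y1.map List.length = b ::ₘ T := (cons_inj_right a).mp h
  have hb : b ∈ Y1.map List.length := by rw [h1]; exact mem_cons_self _ _
  obtain ⟨t, htY, htl⟩ := mem_map.mp hb
  obtain ⟨R, rfl⟩ := exists_cons_of_mem htY
  rw [map_cons, htl] at h1
  exact ⟨s, t, R, rfl, hsl, htl, (cons_inj_right b).mp h1⟩

lemma firstWinAux_succ (n : ℕ) (P : Position) :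
    FirstWinAux (n + 1) P ↔ ∃ Q, Move P Q ∧ ¬ FirstWinAux n Q := Iff.rfl

/-! ### The main induction -/

theorem main_ind : ∀ n : ℕ,
    (∀ (x : Bool) (X : Stack) (Y : Multiset Stack), Multiset.card Y = n →
      X.head? = some x → (∀ t ∈ Y, t.head? = some (!x)) →
      Dpred X.length (Y.map List.length) → ¬ FirstWin (X ::ₘ Y)) ∧
    (∀ (x : Bool) (X : Stack) (Y : Multiset Stack), Multiset.card Y = n →
      X.head? = some x → (∀ t ∈ Y, t.head? = some (!x)) →
      Cpred X.length (Y.map List.length) → FirstWin (X ::ₘ Y)) := by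
  intro n
  induction n using Nat.strong_induction_on with
  | _ n IH =>
  constructor
  · -- D-positions are losses
    rintro x X Y hcard hX hY hD
    intro hFW
    rw [FirstWin, card_cons, hcard, firstWinAux_succ] at hFW
    obtain ⟨Q, hmv, hnQ⟩ := hFW
    have hlen : ∀ t ∈ Y, t.length ≠ X.length := by
      intro t ht hl
      exact hD.2.1 (by rw [← hl]; exact mem_map_of_mem _ ht)
    obtain ⟨s, t, R, hYdef, hQdef⟩ := move_classify hX hY hlen hmv
    subst hQdef
    have hmap : Y.map List.length
        = s.length ::ₘ t.length ::ₘ R.map List.length := by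
      rw [hYdef]; simp
    have hC : Cpred X.length ((X ::ₘ (s ++ t) ::ₘ R).erase X |>.map List.length) := by
      rw [erase_cons_head, map_cons, List.length_append]
      exact D_to_C (hmap ▸ hD)
    rw [erase_cons_head, map_cons, List.length_append] at hC
    have hYR : ∀ u ∈ ((s ++ t) ::ₘ R), u.head? = some (!x) := by
      intro u hu
      rcases mem_cons.mp hu with rfl | hu'
      · exact head?_append' (hY s (by rw [hYdef]; exact mem_cons_self _ _))
      · exact hY u (by rw [hYdef]; exact mem_cons_of_mem (mem_cons_of_mem hu'))
    have hcardR : Multiset.card R + 2 = n := by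
      rw [hYdef] at hcard; simpa using hcard
    have hn1 : 1 ≤ n := by omega
    have hwin : FirstWin (X ::ₘ (s ++ t) ::ₘ R) := by
      refine (IH (n - 1) (by omega)).2 x X ((s ++ t) ::ₘ R) ?_ hX hYR ?_
      · simp; omega
      · rw [map_cons, List.length_append]
        exact D_to_C (hmap ▸ hD)
    apply hnQ
    have hcQ : Multiset.card (X ::ₘ (s ++ t) ::ₘ R) = n := by simp; omega
    rw [FirstWin, hcQ] at hwin
    exact hwin
  · -- C-positions are wins
    rintro x X Y hcard hX hY hC
    have hh : 0 < X.length := by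
      cases X with
      | nil => simp at hX
      | cons a l => simp
    have hpos : ∀ a ∈ Y.map List.length, 0 < a := by
      intro a ha
      obtain ⟨u, hu, rfl⟩ := mem_map.mp ha
      have := ne_nil_of_head? (hY u hu)
      cases u with
      | nil => simp at this
      | cons c l => simp
    obtain ⟨a, b, T, hH, hab, hnT, hnB⟩ :=
      exists_good_merge hC.1 hC.2.1 hC.2.2.1 hC.2.2.2.1 hC.2.2.2.2 hpos hh
    obtain ⟨s, t, R, hYdef, hsl, htl, hRT⟩ := decompose_map hH
    subst hYdef
    have hs : s.head? = some (!x) := hY s (mem_cons_self _ _)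
    have ht : t.head? = some (!x) := hY t (mem_cons_of_mem (mem_cons_self _ _))
    have hmv : Move (X ::ₘ s ::ₘ t ::ₘ R) (X ::ₘ (s ++ t) ::ₘ R) :=
      move_construct hX hs ht
    have hcardR : Multiset.card R + 2 = n := by simpa using hcard
    -- the target D-position
    have hD : Dpred X.length (((s ++ t) ::ₘ R).map List.length) := by
      rw [map_cons, List.length_append, hsl, htl, hRT]
      have hsum : (a ::ₘ b ::ₘ T).sum = a + b + T.sum := by
        simp [add_assoc]
      have hsum2 : X.length < (a ::ₘ b ::ₘ T).sum := hH ▸ hC.2.2.1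
      refine ⟨?_, ?_, ?_, hnB⟩
      · have hEv : Even (Multiset.card (a ::ₘ b ::ₘ T)) := hH ▸ hC.1
        simp only [card_cons] at hEv ⊢
        rw [Nat.even_iff] at hEv; rw [Nat.odd_iff]; omega
      · intro hmem
        rcases mem_cons.mp hmem with h' | h'
        · exact hab h'.symm
        · exact hnT h'
      · rw [sum_cons]
        omega
    have hYR : ∀ u ∈ ((s ++ t) ::ₘ R), u.head? = some (!x) := by
      intro u hu
      rcases mem_cons.mp hu with rfl | hu'
      · exact head?_append' hs
      · exact hY u (mem_cons_of_mem (mem_cons_of_mem hu'))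
    have hlose : ¬ FirstWin (X ::ₘ (s ++ t) ::ₘ R) := by
      refine (IH (n - 1) (by omega)).1 x X ((s ++ t) ::ₘ R) ?_ hX hYR hD
      simp; omega
    rw [FirstWin, card_cons, hcard]
    have hn : n = (n - 1) + 1 := by omega
    rw [hn, firstWinAux_succ]
    refine ⟨X ::ₘ (s ++ t) ::ₘ R, hmv, ?_⟩
    have hcQ : Multiset.card (X ::ₘ (s ++ t) ::ₘ R) = n - 1 + 1 := by simp; omega
    rw [FirstWin, hcQ] at hlose
    exact hlose

end BabylonLemma2

/-- Lemma 2: if the total number of chips is `2 * m`, the number of stacks is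
odd, exactly one stack `X` has color `x`, the height `u` of `X` is less than
`m`, not every stack of the other color has height `u / 2`, and at most two
stacks of the other color have height `u`, then the position is a
first-player win. -/
theorem lemma2 (m u : ℕ) (P : Position) (x : Bool) (X : Stack)
    (hne : ∀ s ∈ P, s ≠ [])
    (hchips : (P.map List.length).sum = 2 * m)
    (hodd : Odd (Multiset.card P))
    (hX : X ∈ P) (hXcol : X.head? = some x)
    (hone : Multiset.card (P.filter (fun s => s.head? = some x)) = 1)
    (hu : X.length = u) (hum : u < m)
    (hhalf : ¬ ∀ t ∈ P, t.head? = some (!x) → 2 * t.length = u)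
    (htwo : Multiset.card
      (P.filter (fun t => t.head? = some (!x) ∧ t.length = u)) ≤ 2) :
    FirstWin P := by
  classical
  obtain ⟨Y, rfl⟩ := Multiset.exists_cons_of_mem hX
  subst hu
  -- every stack in Y has color !x
  have hYx : ∀ t ∈ Y, t.head? = some (!x) := by
    intro t ht
    have ht0 : t ≠ [] := hne t (mem_cons_of_mem ht)
    obtain ⟨c, l, rfl⟩ : ∃ c l, t = c :: l := by
      cases t with
      | nil => exact absurd rfl ht0
      | cons c l => exact ⟨c, l, rfl⟩
    by_cases hcx : c = x
    · exfalso
      rw [filter_cons] at hone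
      simp only [hXcol, if_pos] at hone
      simp at hone
      have hmem : (c :: l) ∈ Y.filter (fun s => s.head? = some x) :=
        mem_filter.mpr ⟨ht, by simp [hcx]⟩
      have h2 : 0 < Multiset.card (Y.filter (fun s => s.head? = some x)) :=
        card_pos.mpr fun h0 => by simp [h0] at hmem
      exact hone _ ht (by simp [hcx])
    · have : c = !x := by cases x <;> cases c <;> simp_all
      simp [this]
  have hCard : Even (Multiset.card (Y.map List.length)) := by
    rw [card_cons] at hodd
    rw [card_map, Nat.even_iff]
    rw [Nat.odd_iff] at hodd
    omega
  have hY0 : Y.map List.length ≠ 0 := by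
    intro h0
    have hY0' : Y = 0 := by
      simpa using congrArg Multiset.card h0
    subst hY0'
    apply hhalf
    intro t ht htc
    rcases mem_cons.mp ht with rfl | h'
    · rw [hXcol] at htc
      exact absurd htc (some_ne_some_not x)
    · simp at h'
  have hsumlt : X.length < (Y.map List.length).sum := by
    have : ((X ::ₘ Y).map List.length).sum
        = X.length + (Y.map List.length).sum := by simp
    omega
  have hnall : ¬ ∀ t ∈ Y.map List.length, 2 * t = X.length := by
    intro hall
    apply hhalf
    intro t ht htc
    rcases mem_cons.mp ht with rfl | h'
    · rw [hXcol] at htc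
      exact absurd htc (some_ne_some_not x)
    · exact hall t.length (mem_map_of_mem _ h')
  have hcnt : (Y.map List.length).count X.length ≤ 2 := by
    have e1 : (Y.map List.length).count X.length
        = Multiset.card (Y.filter (fun t => X.length = t.length)) :=
      count_map _ _ _
    have e2 : ((X ::ₘ Y).filter
          (fun t => t.head? = some (!x) ∧ t.length = X.length))
        = Y.filter (fun t => t.head? = some (!x) ∧ t.length = X.length) := by
      rw [filter_cons_of_neg]
      simp only [hXcol]
      intro hcontra
      exact some_ne_some_not x hcontra.1
    have e3 : Y.filter (fun t => t.head? = some (!x) ∧ t.length = X.length)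
        = Y.filter (fun t => X.length = t.length) := by
      apply filter_congr
      intro t ht
      have := hYx t ht
      constructor
      · rintro ⟨-, h⟩; exact h.symm
      · intro h; exact ⟨this, h.symm⟩
    rw [e1, ← e3, ← e2]
    exact htwo
  exact (main_ind (Multiset.card Y)).2 x X Y rfl hXcol hYx
    ⟨hCard, hY0, hsumlt, hnall, hcnt⟩
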